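/- (Optimal-value characterization via KKT points, the essence of Theorem 1.) Let A : Matrix (Fin m) (Fin n) ℝ, b : Fin m → ℝ, c : Fin n → ℝ, and suppose the feasible set S = {y : Fin n → ℝ | A.mulVec y ≤ b} is nonempty and the set {c ⬝ᵥ y | y ∈ S} is bounded below. Then for every real ε, the inequality ε ≤ sInf {c ⬝ᵥ y | y ∈ S} holds if and only if there exist y : Fin n → ℝ and μ : Fin m → ℝ such that A.mulVec y ≤ b, 0 ≤ μ, Aᵀ.mulVec μ = −c, μ i * ((A.mulVec y) i − b i) = 0 for every i : Fin m, and ε ≤ c ⬝ᵥ y. -/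

import Mathlib

open Matrix BigOperators

namespace KKTAux

variable {η ι : Type*} [Fintype η] [Fintype ι]

/-- The finitely generated cone of a family of vectors. -/
def cone (v : ι → η → ℝ) : Set (η → ℝ) :=
  {x | ∃ c : ι → ℝ, (∀ i, 0 ≤ c i) ∧ x = ∑ i, c i • v i}

lemma mem_cone_of (v : ι → η → ℝ) (c : ι → ℝ) (hc : ∀ i, 0 ≤ c i) :
    (∑ i, c i • v i) ∈ cone v := ⟨c, hc, rfl⟩

/-- Conic Carathéodory, auxiliary induction. -/
lemma carat_aux (v : ι → η → ℝ) :
    ∀ (N : ℕ) (s : Finset ι) (_ : s.card ≤ N) (c : ι → ℝ), (∀ i, 0 ≤ c i) →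
      (∀ i ∉ s, c i = 0) →
      ∃ (s' : Finset ι) (c' : ι → ℝ), LinearIndependent ℝ (fun i : s' => v i) ∧
        (∀ i, 0 ≤ c' i) ∧ (∀ i ∉ s', c' i = 0) ∧ ∑ i, c' i • v i = ∑ i, c i • v i := by
  intro N
  induction N with
  | zero =>
      intro s hcard c hc hsupp
      have hs : s = ∅ := Finset.card_eq_zero.mp (Nat.le_zero.mp hcard)
      refine ⟨s, c, ?_, hc, hsupp, rfl⟩
      subst hs
      exact linearIndependent_empty_type
  | succ N IH =>
      intro s hcard c hc hsupp
      classical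
      by_cases hli : LinearIndependent ℝ (fun i : s => v i)
      · exact ⟨s, c, hli, hc, hsupp, rfl⟩
      · obtain ⟨g, hg0, i₀, hgi₀⟩ := Fintype.not_linearIndependent_iff.mp hli
        -- extend g to ι
        set gg : ι → ℝ := fun i => if h : i ∈ s then g ⟨i, h⟩ else 0 with hgg
        have hggsum : ∑ i, gg i • v i = 0 := by
          have h1 : ∑ i, gg i • v i = ∑ i ∈ s, gg i • v i := by
            refine (Finset.sum_subset s.subset_univ ?_).symm
            intro i _ hi
            simp [hgg, hi]
          have h2 : ∑ i ∈ s, gg i • v i = ∑ i : s, g i • v i := by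
            rw [← Finset.sum_coe_sort s (fun i => gg i • v i)]
            refine Finset.sum_congr rfl ?_
            intro i _
            simp [hgg, i.2]
          rw [h1, h2, hg0]
        have hggsupp : ∀ i ∉ s, gg i = 0 := by intro i hi; simp [hgg, hi]
        -- WLOG there is a positive coefficient
        have key : ∀ (h : ι → ℝ), (∑ i, h i • v i = 0) → (∀ i ∉ s, h i = 0) →
            (∃ i, 0 < h i) →
            ∃ (s' : Finset ι) (c' : ι → ℝ), LinearIndependent ℝ (fun i : s' => v i) ∧
              (∀ i, 0 ≤ c' i) ∧ (∀ i ∉ s', c' i = 0) ∧ ∑ i, c' i • v i = ∑ i, c i • v i := by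
          intro h hsum hsupp' ⟨j, hj⟩
          -- minimize c i / h i over positive h i
          obtain ⟨i₁, hi₁mem, hi₁min⟩ :=
            Finset.exists_min_image (Finset.univ.filter (fun i => 0 < h i))
              (fun i => c i / h i) ⟨j, by simp [hj]⟩
          have hi₁pos : 0 < h i₁ := by simpa using hi₁mem
          set t : ℝ := c i₁ / h i₁ with ht
          have ht0 : 0 ≤ t := div_nonneg (hc i₁) hi₁pos.le
          set c' : ι → ℝ := fun i => c i - t * h i with hc'
          have hc'0 : ∀ i, 0 ≤ c' i := by
            intro i
            by_cases hpos : 0 < h i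
            · have := hi₁min i (by simpa using hpos)
              have : t * h i ≤ c i := by
                rw [ht]
                calc c i₁ / h i₁ * h i ≤ c i / h i * h i := by
                      exact mul_le_mul_of_nonneg_right this hpos.le
                  _ = c i := div_mul_cancel₀ _ hpos.ne'
              simpa [hc'] using this
            · push_neg at hpos
              have : t * h i ≤ 0 := mul_nonpos_of_nonneg_of_nonpos ht0 hpos
              have := hc i
              simp only [hc']
              linarith
          have hc'i₁ : c' i₁ = 0 := by
            simp [hc', ht, div_mul_cancel₀ _ hi₁pos.ne']
          have hc'supp : ∀ i ∉ s.erase i₁, c' i = 0 := by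
            intro i hi
            by_cases hii : i = i₁
            · subst hii; exact hc'i₁
            · have his : i ∉ s := fun hmem => hi (Finset.mem_erase.mpr ⟨hii, hmem⟩)
              simp [hc', hsupp i his, hsupp' i his]
          have hc'sum : ∑ i, c' i • v i = ∑ i, c i • v i := by
            have h1 : ∑ i, c' i • v i = ∑ i, (c i • v i - (t * h i) • v i) := by
              refine Finset.sum_congr rfl fun i _ => ?_
              simp [hc', sub_smul]
            have h2 : ∑ i, (t * h i) • v i = t • ∑ i, h i • v i := by
              rw [Finset.smul_sum]
              exact Finset.sum_congr rfl fun i _ => (smul_smul t (h i) (v i)).symm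
            rw [h1, Finset.sum_sub_distrib, h2, hsum, smul_zero, sub_zero]
          have hcard' : (s.erase i₁).card ≤ N := by
            have h1 : i₁ ∈ s := by
              by_contra hmem
              exact hi₁pos.ne' (hsupp' i₁ hmem)
            have := Finset.card_erase_of_mem h1
            omega
          obtain ⟨s', c'', hli', h0', hs', hsum'⟩ := IH (s.erase i₁) hcard' c' hc'0 hc'supp
          exact ⟨s', c'', hli', h0', hs', hsum'.trans hc'sum⟩
        -- case split on sign of some nonzero coefficient
        by_cases hpos : ∃ i, 0 < gg i
        · exact key gg hggsum hggsupp hpos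
        · refine key (-gg) ?_ ?_ ?_
          · have h1 : ∑ i, (-gg) i • v i = -∑ i, gg i • v i := by
              simp [neg_smul]
            rw [h1, hggsum, neg_zero]
          · intro i hi; simp [hggsupp i hi]
          · push_neg at hpos
            refine ⟨i₀, ?_⟩
            have h1 : gg (i₀ : ι) = g i₀ := by simp [hgg, i₀.2]
            have h2 : gg i₀ ≤ 0 := hpos _
            have : gg (i₀ : ι) ≠ 0 := by rw [h1]; exact hgi₀
            simp only [Pi.neg_apply]
            cases lt_or_eq_of_le h2 with
            | inl h => linarith
            | inr h => exact absurd h this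

section Part2
variable {η ι : Type*} [Fintype η] [Fintype ι]

lemma isClosed_coneFinset (v : ι → η → ℝ) (s : Finset ι)
    (hli : LinearIndependent ℝ (fun i : s => v i)) :
    IsClosed {x : η → ℝ | ∃ c : ι → ℝ, (∀ i, 0 ≤ c i) ∧ (∀ i ∉ s, c i = 0) ∧
      x = ∑ i, c i • v i} := by
  classical
  let T : (s → ℝ) →ₗ[ℝ] (η → ℝ) :=
    { toFun := fun c => ∑ i : s, c i • v i
      map_add' := by
        intro a b
        simp [add_smul, Finset.sum_add_distrib]
      map_smul' := by
        intro r a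
        simp [smul_smul, Finset.smul_sum] }
  have hker : LinearMap.ker T = ⊥ := by
    rw [LinearMap.ker_eq_bot']
    intro c hc
    have := Fintype.linearIndependent_iff.mp hli c hc
    funext i
    exact this i
  have hemb := LinearMap.isClosedEmbedding_of_injective hker
  have horth : IsClosed {c : s → ℝ | ∀ i, 0 ≤ c i} := by
    have : {c : s → ℝ | ∀ i, 0 ≤ c i} = ⋂ i, {c : s → ℝ | 0 ≤ c i} :=
      Set.ext fun c => by simp
    rw [this]
    exact isClosed_iInter fun i => isClosed_Ici.preimage (continuous_apply i)
  have himg : {x : η → ℝ | ∃ c : ι → ℝ, (∀ i, 0 ≤ c i) ∧ (∀ i ∉ s, c i = 0) ∧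
      x = ∑ i, c i • v i} = T '' {c : s → ℝ | ∀ i, 0 ≤ c i} := by
    ext x
    constructor
    · rintro ⟨c, hc0, hcs, rfl⟩
      refine ⟨fun i => c i, fun i => hc0 i, ?_⟩
      show ∑ i : s, c i • v i = ∑ i, c i • v i
      rw [Finset.sum_coe_sort s (fun i => c i • v i)]
      exact Finset.sum_subset s.subset_univ (fun i _ hi => by simp [hcs i hi])
    · rintro ⟨c, hc0, rfl⟩
      refine ⟨fun i => if h : i ∈ s then c ⟨i, h⟩ else 0, ?_, ?_, ?_⟩
      · intro i
        by_cases h : i ∈ s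
        · simpa [h] using hc0 ⟨i, h⟩
        · simp [h]
      · intro i hi; simp [hi]
      · show T c = _
        have h1 : ∑ i : ι, (if h : i ∈ s then c ⟨i, h⟩ else 0) • v i
            = ∑ i ∈ s, (if h : i ∈ s then c ⟨i, h⟩ else 0) • v i := by
          refine (Finset.sum_subset s.subset_univ ?_).symm
          intro i _ hi; simp [hi]
        have h2 : ∑ i ∈ s, (if h : i ∈ s then c ⟨i, h⟩ else 0) • v i
            = ∑ i : s, c i • v i := by
          rw [← Finset.sum_coe_sort s]
          exact Finset.sum_congr rfl fun i _ => by simp [i.2]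
        show ∑ i : s, c i • v i = _
        rw [h1, h2]
  rw [himg]
  exact hemb.isClosedMap _ horth

lemma isClosed_cone (v : ι → η → ℝ) : IsClosed (cone v) := by
  classical
  have hEq : cone v = ⋃ s : {s : Finset ι // LinearIndependent ℝ (fun i : s => v i)},
      {x : η → ℝ | ∃ c : ι → ℝ, (∀ i, 0 ≤ c i) ∧ (∀ i ∉ (s : Finset ι), c i = 0) ∧
        x = ∑ i, c i • v i} := by
    ext x
    constructor
    · rintro ⟨c, hc0, rfl⟩
      obtain ⟨s', c', hli, h0, hs, hsum⟩ :=
        carat_aux v (Finset.univ.card) Finset.univ (le_refl _) c hc0 (by simp)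
      exact Set.mem_iUnion.mpr ⟨⟨s', hli⟩, c', h0, hs, hsum.symm⟩
    · intro hx
      obtain ⟨s, c, hc0, _, rfl⟩ := Set.mem_iUnion.mp hx
      exact ⟨c, hc0, rfl⟩
  rw [hEq]
  exact isClosed_iUnion_of_finite fun s => isClosed_coneFinset v s s.2

end Part2

section Part3
variable {η ι : Type*} [Fintype η] [Fintype ι]

lemma cone_add_mem (v : ι → η → ℝ) {x y : η → ℝ} (hx : x ∈ cone v) (hy : y ∈ cone v) :
    x + y ∈ cone v := by
  obtain ⟨c, hc, rfl⟩ := hx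
  obtain ⟨d, hd, rfl⟩ := hy
  refine ⟨c + d, fun i => add_nonneg (hc i) (hd i), ?_⟩
  simp [add_smul, Finset.sum_add_distrib]

lemma cone_smul_mem (v : ι → η → ℝ) {x : η → ℝ} (r : ℝ) (hr : 0 ≤ r) (hx : x ∈ cone v) :
    r • x ∈ cone v := by
  obtain ⟨c, hc, rfl⟩ := hx
  refine ⟨r • c, fun i => mul_nonneg hr (hc i), ?_⟩
  rw [Finset.smul_sum]
  exact Finset.sum_congr rfl fun i _ => by simp [smul_smul]

lemma zero_mem_cone (v : ι → η → ℝ) : (0 : η → ℝ) ∈ cone v :=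
  ⟨0, fun i => le_refl 0, by simp⟩

lemma single_mem_cone [DecidableEq ι] (v : ι → η → ℝ) (i : ι) : v i ∈ cone v := by
  refine ⟨fun j => if j = i then 1 else 0, fun j => by positivity, ?_⟩
  rw [Finset.sum_eq_single i (fun j _ hj => by simp [hj]) (by simp)]
  simp

/-- Farkas separation: if `t` is not in the cone generated by the `v i`, there is a
separating vector `d`. -/
lemma farkas_sep (v : ι → η → ℝ) (t : η → ℝ) (ht : t ∉ cone v) :
    ∃ d : η → ℝ, (∀ i, 0 ≤ v i ⬝ᵥ d) ∧ t ⬝ᵥ d < 0 := by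
  classical
  let E := EuclideanSpace ℝ η
  let K : ProperCone ℝ E :=
    { carrier := (EuclideanSpace.equiv η ℝ) ⁻¹' cone v
      add_mem' := fun {x y} hx hy => cone_add_mem v hx hy
      zero_mem' := zero_mem_cone v
      smul_mem' := fun r x hx => cone_smul_mem v (r : ℝ) r.2 hx
      isClosed' := (isClosed_cone v).preimage (EuclideanSpace.equiv η ℝ).continuous }
  have htK : WithLp.toLp 2 t ∉ K := ht
  obtain ⟨y, hy1, hy2⟩ := K.hyperplane_separation' htK
  refine ⟨y.ofLp, ?_, ?_⟩
  · intro i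
    have := hy1 (WithLp.toLp 2 (v i)) (single_mem_cone v i)
    rw [PiLp.inner_apply] at this
    simpa [dotProduct, mul_comm] using this
  · rw [real_inner_comm] at hy2
    rw [PiLp.inner_apply] at hy2
    simpa [dotProduct, mul_comm] using hy2

/-- Farkas membership criterion. -/
lemma farkas_mem (v : ι → η → ℝ) (t : η → ℝ)
    (h : ∀ d : η → ℝ, (∀ i, 0 ≤ v i ⬝ᵥ d) → 0 ≤ t ⬝ᵥ d) : t ∈ cone v := by
  by_contra ht
  obtain ⟨d, hd1, hd2⟩ := farkas_sep v t ht
  exact absurd (h d hd1) (not_le.mpr hd2)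

lemma dot_sum_elim {α β : Type*} [Fintype α] [Fintype β]
    (u : α → ℝ) (w : β → ℝ) (x : α ⊕ β → ℝ) :
    Sum.elim u w ⬝ᵥ x = u ⬝ᵥ (fun a => x (Sum.inl a)) + w ⬝ᵥ (fun b => x (Sum.inr b)) := by
  simp [dotProduct, Fintype.sum_sum_type]

/-- Gale's infeasibility certificate. -/
lemma gale (r : ι → η → ℝ) (b : ι → ℝ) (h : ¬ ∃ x : η → ℝ, ∀ i, r i ⬝ᵥ x ≤ b i) :
    ∃ w : ι → ℝ, (∀ i, 0 ≤ w i) ∧ ∑ i, w i • r i = 0 ∧ ∑ i, w i * b i < 0 := by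
  classical
  -- augmented vectors in (η ⊕ Unit) → ℝ
  let u : ι ⊕ Unit → (η ⊕ Unit) → ℝ :=
    Sum.elim (fun i => Sum.elim (r i) (fun _ => b i)) (fun _ => Sum.elim 0 1)
  let t : (η ⊕ Unit) → ℝ := Sum.elim 0 (fun _ => (-1 : ℝ))
  have htmem : t ∈ cone u := by
    apply farkas_mem
    intro d hd
    by_contra hneg
    push_neg at hneg
    have htd : t ⬝ᵥ d = - d (Sum.inr ()) := by
      simp [t, dot_sum_elim, dotProduct]
    have hτpos : 0 < d (Sum.inr ()) := by
      rw [htd] at hneg; linarith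
    have hτ := hd (Sum.inr ())
    -- the primal is feasible with x = -(d ∘ inl) / τ : contradiction
    apply h
    set τ := d (Sum.inr ())
    refine ⟨fun e => -(d (Sum.inl e)) / τ, fun i => ?_⟩
    have hi := hd (Sum.inl i)
    rw [show u (Sum.inl i) = Sum.elim (r i) (fun _ => b i) from rfl, dot_sum_elim] at hi
    have hi' : 0 ≤ r i ⬝ᵥ (fun a => d (Sum.inl a)) + b i * τ := by
      simpa [dotProduct] using hi
    have hdot : (r i ⬝ᵥ fun e => -(d (Sum.inl e)) / τ)
        = (r i ⬝ᵥ fun a => d (Sum.inl a)) * (-τ⁻¹) := by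
      simp only [dotProduct, Finset.sum_mul]
      exact Finset.sum_congr rfl fun x _ => by rw [div_eq_mul_inv]; ring
    rw [hdot]
    have h3 := mul_nonneg hi' (inv_pos.mpr hτpos).le
    have h5 : ((r i ⬝ᵥ fun a => d (Sum.inl a)) + b i * τ) * τ⁻¹
        = (r i ⬝ᵥ fun a => d (Sum.inl a)) * τ⁻¹ + b i := by
      field_simp
    rw [h5] at h3
    nlinarith [h3]
  obtain ⟨c, hc0, hceq⟩ := htmem
  refine ⟨fun i => c (Sum.inl i), fun i => hc0 _, ?_, ?_⟩
  · -- evaluate the identity at the inl coordinates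
    funext e
    have := congrFun hceq (Sum.inl e)
    simp only [t, Sum.elim_inl, Pi.zero_apply] at this
    have hsum : (∑ j : ι ⊕ Unit, c j • u j) (Sum.inl e)
        = ∑ i : ι, c (Sum.inl i) * r i e := by
      rw [Finset.sum_apply]
      rw [Fintype.sum_sum_type]
      simp [u]
    rw [hsum] at this
    have : ∑ i : ι, c (Sum.inl i) * r i e = 0 := this.symm
    calc (∑ i : ι, c (Sum.inl i) • r i) e = ∑ i : ι, c (Sum.inl i) * r i e := by
          rw [Finset.sum_apply]; simp
      _ = 0 := this
  · have := congrFun hceq (Sum.inr ())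
    simp only [t, Sum.elim_inr] at this
    have hsum : (∑ j : ι ⊕ Unit, c j • u j) (Sum.inr ())
        = ∑ i : ι, c (Sum.inl i) * b i + c (Sum.inr ()) := by
      rw [Finset.sum_apply, Fintype.sum_sum_type]
      simp [u]
    rw [hsum] at this
    have h0 := hc0 (Sum.inr ())
    linarith [this.symm]

end Part3

section Part4

variable {m n : ℕ}

lemma transpose_mulVec_eq_sum (A : Matrix (Fin m) (Fin n) ℝ) (μ : Fin m → ℝ) :
    Aᵀ.mulVec μ = ∑ i, μ i • A i := by
  funext j
  simp [Matrix.mulVec, dotProduct, Matrix.transpose_apply, Finset.sum_apply,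
    mul_comm]

lemma dot_mono {κ : Type*} [Fintype κ] {μ x y : κ → ℝ} (hμ : ∀ i, 0 ≤ μ i) (h : x ≤ y) :
    μ ⬝ᵥ x ≤ μ ⬝ᵥ y :=
  Finset.sum_le_sum fun i _ => mul_le_mul_of_nonneg_left (h i) (hμ i)

lemma dual_pair_eq (A : Matrix (Fin m) (Fin n) ℝ) (μ : Fin m → ℝ) (z : Fin n → ℝ) :
    μ ⬝ᵥ A.mulVec z = Aᵀ.mulVec μ ⬝ᵥ z := by
  rw [Matrix.mulVec_transpose, ← dotProduct_mulVec]

/-- Weak duality. -/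
lemma weak_dual (A : Matrix (Fin m) (Fin n) ℝ) (b : Fin m → ℝ) (c : Fin n → ℝ)
    {μ : Fin m → ℝ} (hμ : ∀ i, 0 ≤ μ i) (hdual : Aᵀ.mulVec μ = -c)
    {z : Fin n → ℝ} (hz : A.mulVec z ≤ b) : -(b ⬝ᵥ μ) ≤ c ⬝ᵥ z := by
  have h1 : μ ⬝ᵥ A.mulVec z = -(c ⬝ᵥ z) := by
    rw [dual_pair_eq, hdual, neg_dotProduct]
  have h2 : μ ⬝ᵥ A.mulVec z ≤ μ ⬝ᵥ b := dot_mono hμ hz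
  have h3 : μ ⬝ᵥ b = b ⬝ᵥ μ := dotProduct_comm μ b
  linarith

/-- Dual feasibility from boundedness. -/
lemma dual_feasible (A : Matrix (Fin m) (Fin n) ℝ) (b : Fin m → ℝ) (c : Fin n → ℝ)
    (hne : {y : Fin n → ℝ | A.mulVec y ≤ b}.Nonempty)
    (hbdd : BddBelow ((fun y => c ⬝ᵥ y) '' {y : Fin n → ℝ | A.mulVec y ≤ b})) :
    ∃ μ : Fin m → ℝ, (∀ i, 0 ≤ μ i) ∧ Aᵀ.mulVec μ = -c := by
  have hmem : (-c) ∈ cone (fun i : Fin m => A i) := by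
    apply farkas_mem
    intro d hd
    by_contra hlt
    push_neg at hlt
    have hcd : 0 < c ⬝ᵥ d := by
      rw [neg_dotProduct] at hlt; linarith
    obtain ⟨y0, hy0⟩ := hne
    obtain ⟨L, hL⟩ := hbdd
    have hLy0 : L ≤ c ⬝ᵥ y0 := hL ⟨y0, hy0, rfl⟩
    set T : ℝ := (c ⬝ᵥ y0 - L) / (c ⬝ᵥ d) + 1 with hT
    have hTpos : 0 < T := by
      have : 0 ≤ (c ⬝ᵥ y0 - L) / (c ⬝ᵥ d) := div_nonneg (by linarith) hcd.le
      rw [hT]; linarith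
    have hfeas : A.mulVec (y0 - T • d) ≤ b := by
      intro i
      have h1 : (A.mulVec (y0 - T • d)) i = (A.mulVec y0) i - T * (A.mulVec d) i := by
        rw [Matrix.mulVec_sub, Matrix.mulVec_smul]
        simp
      have h2 : 0 ≤ (A.mulVec d) i := hd i
      have := hy0 i
      rw [h1]
      nlinarith
    have hobj : c ⬝ᵥ (y0 - T • d) < L := by
      have h1 : c ⬝ᵥ (y0 - T • d) = c ⬝ᵥ y0 - T * (c ⬝ᵥ d) := by
        rw [dotProduct_sub, dotProduct_smul]
        simp
      have h2 : c ⬝ᵥ y0 - L < T * (c ⬝ᵥ d) := by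
        have := (div_lt_iff₀ hcd).mp (show (c ⬝ᵥ y0 - L) / (c ⬝ᵥ d) < T by
          rw [hT]; have : 0 < (1:ℝ) := one_pos; linarith)
        linarith
      linarith
    exact absurd (hL ⟨y0 - T • d, hfeas, rfl⟩) (not_le.mpr hobj)
  obtain ⟨μ, hμ, hsum⟩ := hmem
  exact ⟨μ, hμ, by rw [transpose_mulVec_eq_sum]; exact hsum.symm⟩

end Part4

section Part5

variable {m n : ℕ}

/-- Index type for the combined primal-dual system. -/
abbrev SysIdx (m n : ℕ) := Fin m ⊕ (Fin m ⊕ (Fin n ⊕ (Fin n ⊕ Unit)))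

/-- Rows of the combined primal-dual system over variables `(y, μ)`. -/
def sysR (A : Matrix (Fin m) (Fin n) ℝ) (b : Fin m → ℝ) (c : Fin n → ℝ) :
    SysIdx m n → (Fin n ⊕ Fin m) → ℝ :=
  Sum.elim (fun i => Sum.elim (A i) 0)
    (Sum.elim (fun i => Sum.elim 0 (fun i' => if i' = i then (-1 : ℝ) else 0))
      (Sum.elim (fun j => Sum.elim 0 (fun i => A i j))
        (Sum.elim (fun j => Sum.elim 0 (fun i => -A i j))
          (fun _ => Sum.elim c b))))

/-- Right-hand sides of the combined primal-dual system. -/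
def sysB (b : Fin m → ℝ) (c : Fin n → ℝ) : SysIdx m n → ℝ :=
  Sum.elim b (Sum.elim 0 (Sum.elim (fun j => -c j) (Sum.elim (fun j => c j) (fun _ => 0))))

lemma sysR_dot₁ (A : Matrix (Fin m) (Fin n) ℝ) (b : Fin m → ℝ) (c : Fin n → ℝ)
    (x : Fin n ⊕ Fin m → ℝ) (i : Fin m) :
    sysR A b c (Sum.inl i) ⬝ᵥ x = (A.mulVec fun j => x (Sum.inl j)) i := by
  simp [sysR, dot_sum_elim, Matrix.mulVec]

lemma sysR_dot₂ (A : Matrix (Fin m) (Fin n) ℝ) (b : Fin m → ℝ) (c : Fin n → ℝ)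
    (x : Fin n ⊕ Fin m → ℝ) (i : Fin m) :
    sysR A b c (Sum.inr (Sum.inl i)) ⬝ᵥ x = -(x (Sum.inr i)) := by
  simp [sysR, dot_sum_elim, dotProduct, ite_mul]

lemma sysR_dot₃ (A : Matrix (Fin m) (Fin n) ℝ) (b : Fin m → ℝ) (c : Fin n → ℝ)
    (x : Fin n ⊕ Fin m → ℝ) (j : Fin n) :
    sysR A b c (Sum.inr (Sum.inr (Sum.inl j))) ⬝ᵥ x
      = (Aᵀ.mulVec fun i => x (Sum.inr i)) j := by
  simp [sysR, dot_sum_elim, Matrix.mulVec, dotProduct, Matrix.transpose_apply]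

lemma sysR_dot₄ (A : Matrix (Fin m) (Fin n) ℝ) (b : Fin m → ℝ) (c : Fin n → ℝ)
    (x : Fin n ⊕ Fin m → ℝ) (j : Fin n) :
    sysR A b c (Sum.inr (Sum.inr (Sum.inr (Sum.inl j)))) ⬝ᵥ x
      = -((Aᵀ.mulVec fun i => x (Sum.inr i)) j) := by
  simp [sysR, dot_sum_elim, Matrix.mulVec, dotProduct, Matrix.transpose_apply,
    Finset.sum_neg_distrib]

lemma sysR_dot₅ (A : Matrix (Fin m) (Fin n) ℝ) (b : Fin m → ℝ) (c : Fin n → ℝ)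
    (x : Fin n ⊕ Fin m → ℝ) (u : Unit) :
    sysR A b c (Sum.inr (Sum.inr (Sum.inr (Sum.inr u)))) ⬝ᵥ x
      = c ⬝ᵥ (fun j => x (Sum.inl j)) + b ⬝ᵥ (fun i => x (Sum.inr i)) := by
  simp [sysR, dot_sum_elim]

/-- The combined primal-dual system is feasible. -/
lemma system_feasible (A : Matrix (Fin m) (Fin n) ℝ) (b : Fin m → ℝ) (c : Fin n → ℝ)
    (hne : {y : Fin n → ℝ | A.mulVec y ≤ b}.Nonempty)
    (hbdd : BddBelow ((fun y => c ⬝ᵥ y) '' {y : Fin n → ℝ | A.mulVec y ≤ b})) :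
    ∃ x : Fin n ⊕ Fin m → ℝ, ∀ i, sysR A b c i ⬝ᵥ x ≤ sysB b c i := by
  obtain ⟨y0, hy0⟩ := hne
  obtain ⟨μ0, hμ0, hdual0⟩ := dual_feasible A b c ⟨y0, hy0⟩ hbdd
  by_contra hinf
  obtain ⟨w, hw0, hwsum, hwb⟩ := gale (sysR A b c) (sysB b c) hinf
  set p : Fin m → ℝ := fun i => w (Sum.inl i) with hp
  set q : Fin m → ℝ := fun i => w (Sum.inr (Sum.inl i)) with hq
  set rr : Fin n → ℝ := fun j => w (Sum.inr (Sum.inr (Sum.inl j))) with hrr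
  set ss : Fin n → ℝ := fun j => w (Sum.inr (Sum.inr (Sum.inr (Sum.inl j)))) with hss
  set t : ℝ := w (Sum.inr (Sum.inr (Sum.inr (Sum.inr ())))) with htdef
  have hppos : ∀ i, 0 ≤ p i := fun i => hw0 _
  have hqpos : ∀ i, 0 ≤ q i := fun i => hw0 _
  have htpos : 0 ≤ t := hw0 _
  -- component identities of the null combination
  have hP : ∀ j, (Aᵀ.mulVec p) j + t * c j = 0 := by
    intro j
    have h0 := congrFun hwsum (Sum.inl j)
    simp only [Finset.sum_apply, Pi.smul_apply, smul_eq_mul, Pi.zero_apply,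
      Fintype.sum_sum_type, Fintype.sum_unique, sysR, Sum.elim_inl, Sum.elim_inr] at h0
    simp only [Matrix.mulVec, dotProduct, Matrix.transpose_apply]
    rw [Finset.sum_congr rfl (fun i _ => mul_comm (A i j) (p i))]
    simpa [hp] using h0
  have hQ : ∀ i, -(q i) + (A.mulVec (fun j => rr j - ss j)) i + t * b i = 0 := by
    intro i
    have h0 := congrFun hwsum (Sum.inr i)
    simp only [Finset.sum_apply, Pi.smul_apply, smul_eq_mul, Pi.zero_apply,
      Fintype.sum_sum_type, Fintype.sum_unique, sysR, Sum.elim_inl, Sum.elim_inr] at h0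
    simp only [Matrix.mulVec, dotProduct]
    have hexp : ∑ j, A i j * (rr j - ss j)
        = ∑ j, rr j * A i j + ∑ j, ss j * (-(A i j)) := by
      rw [← Finset.sum_add_distrib]
      exact Finset.sum_congr rfl fun j _ => by ring
    rw [hexp]
    simp only [mul_ite, mul_neg_one, mul_zero, Finset.sum_ite_eq', Finset.mem_univ,
      if_true, mul_ite] at h0
    have h1 : ∑ i' : Fin m, q i' * (if i = i' then (-1:ℝ) else 0) = -(q i) := by
      rw [Finset.sum_eq_single i (fun i' _ hi' => by simp [Ne.symm hi'])
        (by simp)]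
      simp
    have hd : (default : Unit) = () := rfl
    rw [hd] at h0
    simp only [Finset.sum_ite_eq, Finset.mem_univ, if_true, Finset.sum_const_zero] at h0
    simp only [hp, hq, hrr, hss, htdef] at h0 ⊢
    linarith [h0]
  have hB : (∑ i, p i * b i) + ((∑ j, rr j * (-c j)) + (∑ j, ss j * c j)) < 0 := by
    have h0 := hwb
    have hd : (default : Unit) = () := rfl
    simp only [Fintype.sum_sum_type, Fintype.sum_unique, sysB, Sum.elim_inl, Sum.elim_inr,
      Pi.zero_apply, mul_zero, mul_neg, Finset.sum_const_zero, add_zero, zero_add, hd] at h0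
    simp only [hp, hrr, hss, mul_neg]
    linarith [h0]
  have hS : (∑ j, rr j * (-c j)) + (∑ j, ss j * c j) = c ⬝ᵥ (fun j => ss j - rr j) := by
    rw [← Finset.sum_add_distrib]
    simp only [dotProduct]
    exact Finset.sum_congr rfl fun j _ => by ring
  have hArs : A.mulVec (fun j => rr j - ss j) = fun i => q i - t * b i := by
    funext i
    have := hQ i
    linarith
  have hAsr : A.mulVec (fun j => ss j - rr j) = fun i => t * b i - q i := by
    have hneg : (fun j => ss j - rr j) = -(fun j => rr j - ss j) := by
      funext j; simp
    rw [hneg, Matrix.mulVec_neg, hArs]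
    funext i; simp
  rcases eq_or_lt_of_le htpos with ht0 | htpos'
  · -- t = 0
    have hP0 : Aᵀ.mulVec p = 0 := by
      funext j
      have := hP j
      rw [← ht0] at this
      simpa using this
    have h1 : 0 ≤ ∑ i, p i * b i := by
      have e1 : p ⬝ᵥ A.mulVec y0 = Aᵀ.mulVec p ⬝ᵥ y0 := dual_pair_eq A p y0
      rw [hP0, zero_dotProduct] at e1
      have e2 : p ⬝ᵥ A.mulVec y0 ≤ p ⬝ᵥ b := dot_mono hppos hy0
      have e3 : p ⬝ᵥ b = ∑ i, p i * b i := rfl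
      linarith
    have h2 : 0 ≤ c ⬝ᵥ (fun j => ss j - rr j) := by
      have e1 : c ⬝ᵥ (fun j => ss j - rr j)
          = -(Aᵀ.mulVec μ0 ⬝ᵥ (fun j => ss j - rr j)) := by
        rw [hdual0, neg_dotProduct, neg_neg]
      have e2 : Aᵀ.mulVec μ0 ⬝ᵥ (fun j => ss j - rr j)
          = μ0 ⬝ᵥ A.mulVec (fun j => ss j - rr j) := (dual_pair_eq A μ0 _).symm
      rw [e1, e2, hAsr]
      have e3 : μ0 ⬝ᵥ (fun i => t * b i - q i) = μ0 ⬝ᵥ (fun i => -(q i)) := by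
        refine Finset.sum_congr rfl fun i _ => by rw [← ht0]; ring
      rw [e3]
      have e4 : μ0 ⬝ᵥ (fun i => -(q i)) = -(μ0 ⬝ᵥ q) := by
        simp [dotProduct, Finset.sum_neg_distrib]
      rw [e4, neg_neg]
      exact Finset.sum_nonneg fun i _ => mul_nonneg (hμ0 i) (hqpos i)
    rw [hS] at hB
    linarith
  · -- 0 < t
    set μ1 : Fin m → ℝ := t⁻¹ • p with hμ1def
    set y1 : Fin n → ℝ := t⁻¹ • (fun j => ss j - rr j) with hy1def
    have hμ1 : ∀ i, 0 ≤ μ1 i := fun i =>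
      mul_nonneg (inv_pos.mpr htpos').le (hppos i)
    have hdual1 : Aᵀ.mulVec μ1 = -c := by
      rw [hμ1def, Matrix.mulVec_smul]
      funext j
      have := hP j
      have ht' : t ≠ 0 := htpos'.ne'
      simp only [Pi.smul_apply, smul_eq_mul, Pi.neg_apply]
      field_simp
      linarith
    have hy1feas : A.mulVec y1 ≤ b := by
      intro i
      rw [hy1def, Matrix.mulVec_smul, hAsr]
      have ht' : t ≠ 0 := htpos'.ne'
      have hqi := hqpos i
      simp only [Pi.smul_apply, smul_eq_mul]
      have : t⁻¹ * (t * b i - q i) = b i - t⁻¹ * q i := by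
        field_simp
      rw [this]
      have : 0 ≤ t⁻¹ * q i := mul_nonneg (inv_pos.mpr htpos').le hqi
      linarith
    have hwd := weak_dual A b c hμ1 hdual1 hy1feas
    have e1 : b ⬝ᵥ μ1 = t⁻¹ * (∑ i, p i * b i) := by
      rw [hμ1def]
      simp only [dotProduct, Pi.smul_apply, smul_eq_mul, Finset.mul_sum]
      exact Finset.sum_congr rfl fun i _ => by ring
    have e2 : c ⬝ᵥ y1 = t⁻¹ * (c ⬝ᵥ (fun j => ss j - rr j)) := by
      rw [hy1def]
      simp only [dotProduct, Pi.smul_apply, smul_eq_mul, Finset.mul_sum]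
      exact Finset.sum_congr rfl fun j _ => by ring
    rw [hS] at hB
    rw [e1, e2] at hwd
    nlinarith [mul_pos (inv_pos.mpr htpos') (neg_pos.mpr hB)]

end Part5

end KKTAux

open KKTAux in
/-- Optimal-value characterization via KKT points (essence of Theorem 1): for a
feasible, bounded-below linear program, `ε` lower-bounds the optimal value iff some
primal-dual pair satisfies the KKT system with objective value at least `ε`. -/
theorem inf_lower_bound_iff_kkt_point
    (m n : ℕ) (A : Matrix (Fin m) (Fin n) ℝ) (b : Fin m → ℝ) (c : Fin n → ℝ)
    (hne : {y : Fin n → ℝ | A.mulVec y ≤ b}.Nonempty)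
    (hbdd : BddBelow ((fun y => c ⬝ᵥ y) '' {y : Fin n → ℝ | A.mulVec y ≤ b}))
    (ε : ℝ) :
    ε ≤ sInf ((fun y => c ⬝ᵥ y) '' {y : Fin n → ℝ | A.mulVec y ≤ b}) ↔
      ∃ (y : Fin n → ℝ) (μ : Fin m → ℝ),
        A.mulVec y ≤ b ∧ 0 ≤ μ ∧ Aᵀ.mulVec μ = -c ∧
        (∀ i : Fin m, μ i * ((A.mulVec y) i - b i) = 0) ∧ ε ≤ c ⬝ᵥ y := by
  constructor
  · intro hle
    obtain ⟨x, hx⟩ := system_feasible A b c hne hbdd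
    set y : Fin n → ℝ := fun j => x (Sum.inl j) with hy
    set μ : Fin m → ℝ := fun i => x (Sum.inr i) with hμdef
    have hfeas : A.mulVec y ≤ b := by
      intro i
      have := hx (Sum.inl i)
      rwa [sysR_dot₁] at this
    have hμpos : ∀ i, 0 ≤ μ i := by
      intro i
      have := hx (Sum.inr (Sum.inl i))
      rw [sysR_dot₂] at this
      have hB0 : sysB b c (Sum.inr (Sum.inl i)) = 0 := rfl
      rw [hB0] at this
      linarith
    have hdual : Aᵀ.mulVec μ = -c := by
      funext j
      have h1 := hx (Sum.inr (Sum.inr (Sum.inl j)))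
      rw [sysR_dot₃] at h1
      have h2 := hx (Sum.inr (Sum.inr (Sum.inr (Sum.inl j))))
      rw [sysR_dot₄] at h2
      have hB1 : sysB b c (Sum.inr (Sum.inr (Sum.inl j))) = -c j := rfl
      have hB2 : sysB b c (Sum.inr (Sum.inr (Sum.inr (Sum.inl j)))) = c j := rfl
      rw [hB1] at h1
      rw [hB2] at h2
      have : (-c) j = -c j := rfl
      rw [this]
      linarith
    have hobj : c ⬝ᵥ y + b ⬝ᵥ μ ≤ 0 := by
      have := hx (Sum.inr (Sum.inr (Sum.inr (Sum.inr ()))))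
      rw [sysR_dot₅] at this
      exact this
    have hwd := weak_dual A b c hμpos hdual hfeas
    have heq : c ⬝ᵥ y + b ⬝ᵥ μ = 0 := by
      have h4 : μ ⬝ᵥ b = b ⬝ᵥ μ := dotProduct_comm μ b
      linarith
    have hcs0 : μ ⬝ᵥ A.mulVec y = -(c ⬝ᵥ y) := by
      rw [dual_pair_eq, hdual, neg_dotProduct]
    have hsum0 : ∑ i, μ i * (b i - (A.mulVec y) i) = 0 := by
      have hexp : ∑ i, μ i * (b i - (A.mulVec y) i) = μ ⬝ᵥ b - μ ⬝ᵥ A.mulVec y := by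
        simp [dotProduct, mul_sub, Finset.sum_sub_distrib]
      have h4 : μ ⬝ᵥ b = b ⬝ᵥ μ := dotProduct_comm μ b
      rw [hexp]
      linarith
    have hzero := (Finset.sum_eq_zero_iff_of_nonneg
      (fun i _ => mul_nonneg (hμpos i) (sub_nonneg.mpr (hfeas i)))).mp hsum0
    refine ⟨y, μ, hfeas, fun i => hμpos i, hdual, ?_, ?_⟩
    · intro i
      have := hzero i (Finset.mem_univ i)
      nlinarith [this]
    · exact le_trans hle (csInf_le hbdd ⟨y, hfeas, rfl⟩)
  · rintro ⟨y, μ, hfeas, hμ, hdual, hcs, hεy⟩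
    refine le_csInf (hne.image _) ?_
    rintro z ⟨z0, hz0, rfl⟩
    have h1 : μ ⬝ᵥ A.mulVec y = μ ⬝ᵥ b := by
      have hz : ∑ i, μ i * ((A.mulVec y) i - b i) = 0 :=
        Finset.sum_eq_zero fun i _ => hcs i
      have hexp : ∑ i, μ i * ((A.mulVec y) i - b i) = μ ⬝ᵥ A.mulVec y - μ ⬝ᵥ b := by
        simp [dotProduct, mul_sub, Finset.sum_sub_distrib]
      rw [hexp] at hz
      linarith
    have h2 : μ ⬝ᵥ A.mulVec y = -(c ⬝ᵥ y) := by
      rw [dual_pair_eq, hdual, neg_dotProduct]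
    have h3 := weak_dual A b c (fun i => hμ i) hdual hz0
    have h4 : μ ⬝ᵥ b = b ⬝ᵥ μ := dotProduct_comm μ b
    have : c ⬝ᵥ y ≤ c ⬝ᵥ z0 := by linarith
    exact le_trans hεy this
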